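/- Let $v : S \to \mathbb{R}$ with $S \subseteq \mathbb{R}^N$ be Hölder continuous with constant $A \geq 0$ and exponent $\beta \in (0,1]$, i.e., $|v(x)-v(x')| \leq A \|x-x'\|_2^{\beta}$ for all $x, x' \in S$. Let $X$ be an $S$-valued random variable with finite second moments. Then $\mathrm{Var}[v(X)] \leq \frac{A^2}{2^{1-\beta}} \left( \sum_{i=1}^N \mathrm{Var}[X_i] \right)^{\beta}$. -/

import Mathlib

open MeasureTheory ProbabilityTheory

lemma pair_sq_integrable {Ω : Type*} [MeasureSpace Ω] [IsProbabilityMeasure (ℙ : Measure Ω)]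
    {g : Ω → ℝ} (hg : MemLp g 2 ℙ) :
    Integrable (fun a : Ω × Ω => (g a.1 - g a.2) ^ 2) ((ℙ : Measure Ω).prod ℙ) := by
  have hgi : Integrable g ℙ := hg.integrable one_le_two
  have h1 : Integrable (fun a : Ω × Ω => g a.1 ^ 2) ((ℙ : Measure Ω).prod ℙ) := by
    simpa using hg.integrable_sq.mul_prod (integrable_const (1:ℝ) (μ := (ℙ : Measure Ω)))
  have h2 : Integrable (fun a : Ω × Ω => g a.2 ^ 2) ((ℙ : Measure Ω).prod ℙ) := by
    simpa using (integrable_const (1:ℝ) (μ := (ℙ : Measure Ω))).mul_prod hg.integrable_sq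
  have h3 : Integrable (fun a : Ω × Ω => 2 * (g a.1 * g a.2)) ((ℙ : Measure Ω).prod ℙ) :=
    (hgi.mul_prod hgi).const_mul 2
  have : (fun a : Ω × Ω => (g a.1 - g a.2) ^ 2)
      = fun a : Ω × Ω => g a.1 ^ 2 - 2 * (g a.1 * g a.2) + g a.2 ^ 2 := by
    funext a; ring
  rw [this]
  exact (h1.sub h3).add h2

lemma pair_integral_sq {Ω : Type*} [MeasureSpace Ω] [IsProbabilityMeasure (ℙ : Measure Ω)]
    {g : Ω → ℝ} (hg : MemLp g 2 ℙ) :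
    ∫ a : Ω × Ω, (g a.1 - g a.2) ^ 2 ∂((ℙ : Measure Ω).prod ℙ) = 2 * variance g ℙ := by
  have hgi : Integrable g ℙ := hg.integrable one_le_two
  have h1 : Integrable (fun a : Ω × Ω => g a.1 ^ 2) ((ℙ : Measure Ω).prod ℙ) := by
    simpa using hg.integrable_sq.mul_prod (integrable_const (1:ℝ) (μ := (ℙ : Measure Ω)))
  have h2 : Integrable (fun a : Ω × Ω => g a.2 ^ 2) ((ℙ : Measure Ω).prod ℙ) := by
    simpa using (integrable_const (1:ℝ) (μ := (ℙ : Measure Ω))).mul_prod hg.integrable_sq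
  have h3 : Integrable (fun a : Ω × Ω => 2 * (g a.1 * g a.2)) ((ℙ : Measure Ω).prod ℙ) :=
    (hgi.mul_prod hgi).const_mul 2
  have e1 : ∫ a : Ω × Ω, g a.1 ^ 2 ∂((ℙ : Measure Ω).prod ℙ) = ∫ ω, g ω ^ 2 ∂ℙ := by
    simpa using integral_prod_mul (μ := (ℙ : Measure Ω)) (ν := (ℙ : Measure Ω))
      (fun ω => g ω ^ 2) (fun _ => (1:ℝ))
  have e2 : ∫ a : Ω × Ω, g a.2 ^ 2 ∂((ℙ : Measure Ω).prod ℙ) = ∫ ω, g ω ^ 2 ∂ℙ := by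
    simpa using integral_prod_mul (μ := (ℙ : Measure Ω)) (ν := (ℙ : Measure Ω))
      (fun _ => (1:ℝ)) (fun ω => g ω ^ 2)
  have e3 : ∫ a : Ω × Ω, g a.1 * g a.2 ∂((ℙ : Measure Ω).prod ℙ) = (∫ ω, g ω ∂ℙ) ^ 2 := by
    rw [integral_prod_mul (μ := (ℙ : Measure Ω)) (ν := (ℙ : Measure Ω)) g g, sq]
  have expand : (fun a : Ω × Ω => (g a.1 - g a.2) ^ 2)
      = fun a : Ω × Ω => g a.1 ^ 2 - 2 * (g a.1 * g a.2) + g a.2 ^ 2 := by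
    funext a; ring
  have h13 : Integrable (fun a : Ω × Ω => g a.1 ^ 2 - 2 * (g a.1 * g a.2))
      ((ℙ : Measure Ω).prod ℙ) := h1.sub h3
  rw [expand, integral_add h13 h2]
  rw [integral_sub h1 h3, integral_const_mul, e1, e2, e3, variance_eq_sub hg]
  simp only [Pi.pow_apply]
  ring

lemma jensen_rpow {α : Type*} [MeasurableSpace α] {μ : Measure α} [IsProbabilityMeasure μ]
    {h : α → ℝ} {β : ℝ} (hβ0 : 0 < β) (hβ1 : β ≤ 1)
    (hpos : ∀ x, 0 ≤ h x) (hi : Integrable h μ)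
    (hi2 : Integrable (fun x => h x ^ β) μ) :
    ∫ x, h x ^ β ∂μ ≤ (∫ x, h x ∂μ) ^ β := by
  have hc : ConcaveOn ℝ (Set.Ici 0) fun x : ℝ => x ^ β := Real.concaveOn_rpow hβ0.le hβ1
  exact hc.le_map_integral (Real.continuous_rpow_const hβ0.le).continuousOn isClosed_Ici
    (Filter.Eventually.of_forall hpos) hi hi2

lemma rpow_sq_comm {β : ℝ} (r : ℝ) (hr : 0 ≤ r) : (r ^ β) ^ 2 = (r ^ 2) ^ β := by
  rw [← Real.rpow_natCast (r ^ β) 2, ← Real.rpow_natCast r 2, ← Real.rpow_mul hr,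
    ← Real.rpow_mul hr, mul_comm]

theorem holder_variance_bound
    {Ω : Type*} [MeasureSpace Ω] [IsProbabilityMeasure (ℙ : Measure Ω)]
    {N : ℕ} (S : Set (EuclideanSpace ℝ (Fin N)))
    (v : EuclideanSpace ℝ (Fin N) → ℝ) (A β : ℝ)
    (hA : 0 ≤ A) (hβ0 : 0 < β) (hβ1 : β ≤ 1)
    (hHolder : ∀ x ∈ S, ∀ x' ∈ S, |v x - v x'| ≤ A * ‖x - x'‖ ^ β)
    (X : Ω → EuclideanSpace ℝ (Fin N)) (hX : Measurable X)
    (hXS : ∀ ω, X ω ∈ S)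
    (hX2 : ∀ i, MemLp (fun ω => X ω i) 2 ℙ)
    (hv2 : MemLp (fun ω => v (X ω)) 2 ℙ) :
    variance (fun ω => v (X ω)) ℙ ≤
      A ^ 2 / 2 ^ (1 - β) *
        (∑ i : Fin N, variance (fun ω => X ω i) ℙ) ^ β := by
  set P := (ℙ : Measure Ω).prod (ℙ : Measure Ω) with hPdef
  set f : Ω → ℝ := fun ω => v (X ω) with hfdef
  set G : Ω × Ω → ℝ := fun a => ‖X a.1 - X a.2‖ ^ 2 with hGdef
  set s : ℝ := ∑ i : Fin N, variance (fun ω => X ω i) ℙ with hsdef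
  have hGnn : ∀ a, 0 ≤ G a := fun a => sq_nonneg _
  have hGeq : ∀ a : Ω × Ω, G a = ∑ i, (X a.1 i - X a.2 i) ^ 2 := by
    intro a
    rw [hGdef]
    simp only [EuclideanSpace.norm_eq]
    rw [Real.sq_sqrt (Finset.sum_nonneg fun i _ => sq_nonneg _)]
    simp [Real.norm_eq_abs, sq_abs]
  -- integrability of G
  have hGint : Integrable G P := by
    have : G = fun a : Ω × Ω => ∑ i, ((fun ω => X ω i) a.1 - (fun ω => X ω i) a.2) ^ 2 := by
      funext a; exact hGeq a
    rw [this]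
    exact integrable_finset_sum _ fun i _ => pair_sq_integrable (hX2 i)
  -- measurability of G ^ β
  have hGm : Measurable G := by
    have : Measurable fun a : Ω × Ω => X a.1 - X a.2 :=
      (hX.comp measurable_fst).sub (hX.comp measurable_snd)
    exact (this.norm).pow_const 2
  have hGβm : AEStronglyMeasurable (fun a => G a ^ β) P :=
    ((Real.continuous_rpow_const hβ0.le).measurable.comp hGm).aestronglyMeasurable
  -- integrability of G ^ β
  have hGβint : Integrable (fun a => G a ^ β) P := by
    refine Integrable.mono' ((integrable_const (1:ℝ)).add hGint) hGβm
      (Filter.Eventually.of_forall fun a => ?_)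
    rw [Real.norm_eq_abs, abs_of_nonneg (Real.rpow_nonneg (hGnn a) β)]
    rcases le_total (G a) 1 with hle | hle
    · have := Real.rpow_le_one (hGnn a) hle hβ0.le
      simp only [Pi.add_apply]
      linarith [hGnn a]
    · have h1 : G a ^ β ≤ G a ^ (1:ℝ) :=
        Real.rpow_le_rpow_of_exponent_le hle hβ1
      rw [Real.rpow_one] at h1
      simp only [Pi.add_apply]
      linarith
  -- pointwise Hölder bound
  have hpw : ∀ a : Ω × Ω, (f a.1 - f a.2) ^ 2 ≤ A ^ 2 * G a ^ β := by
    intro a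
    have h := hHolder (X a.1) (hXS a.1) (X a.2) (hXS a.2)
    have hd : (0:ℝ) ≤ ‖X a.1 - X a.2‖ := norm_nonneg _
    have h1 : (f a.1 - f a.2) ^ 2 ≤ (A * ‖X a.1 - X a.2‖ ^ β) ^ 2 := by
      rw [← sq_abs]
      exact pow_le_pow_left₀ (abs_nonneg _) h 2
    calc (f a.1 - f a.2) ^ 2 ≤ (A * ‖X a.1 - X a.2‖ ^ β) ^ 2 := h1
      _ = A ^ 2 * G a ^ β := by
          rw [mul_pow, rpow_sq_comm _ hd]
  -- main chain
  have key : variance f ℙ = (∫ a, (f a.1 - f a.2) ^ 2 ∂P) / 2 := by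
    rw [pair_integral_sq hv2]; ring
  have step1 : ∫ a, (f a.1 - f a.2) ^ 2 ∂P ≤ ∫ a, A ^ 2 * G a ^ β ∂P :=
    integral_mono (pair_sq_integrable hv2) (hGβint.const_mul _) hpw
  have step2 : ∫ a, A ^ 2 * G a ^ β ∂P = A ^ 2 * ∫ a, G a ^ β ∂P := integral_const_mul _ _
  have step3 : ∫ a, G a ^ β ∂P ≤ (∫ a, G a ∂P) ^ β :=
    jensen_rpow hβ0 hβ1 hGnn hGint hGβint
  have step4 : ∫ a, G a ∂P = 2 * s := by
    calc ∫ a, G a ∂P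
        = ∫ a : Ω × Ω, ∑ i, ((fun ω => X ω i) a.1 - (fun ω => X ω i) a.2) ^ 2 ∂P := by
          congr 1; funext a; exact hGeq a
      _ = ∑ i, ∫ a : Ω × Ω, ((fun ω => X ω i) a.1 - (fun ω => X ω i) a.2) ^ 2 ∂P :=
          integral_finset_sum _ fun i _ => pair_sq_integrable (hX2 i)
      _ = ∑ i, 2 * variance (fun ω => X ω i) ℙ :=
          Finset.sum_congr rfl fun i _ => pair_integral_sq (hX2 i)
      _ = 2 * s := by rw [hsdef, Finset.mul_sum]
  have hs : 0 ≤ s := Finset.sum_nonneg fun i _ => variance_nonneg _ _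
  have h2β : (0:ℝ) < 2 ^ β := Real.rpow_pos_of_pos two_pos β
  have hfin : A ^ 2 / 2 ^ (1 - β) * s ^ β = A ^ 2 * (2 ^ β * s ^ β) / 2 := by
    rw [Real.rpow_sub (by norm_num : (0:ℝ) < 2), Real.rpow_one]
    field_simp
  calc variance f ℙ = (∫ a, (f a.1 - f a.2) ^ 2 ∂P) / 2 := key
    _ ≤ (∫ a, A ^ 2 * G a ^ β ∂P) / 2 := by linarith
    _ = A ^ 2 * (∫ a, G a ^ β ∂P) / 2 := by rw [step2]
    _ ≤ A ^ 2 * (∫ a, G a ∂P) ^ β / 2 := by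
        have := mul_le_mul_of_nonneg_left step3 (sq_nonneg A)
        linarith
    _ = A ^ 2 * (2 * s) ^ β / 2 := by rw [step4]
    _ = A ^ 2 * (2 ^ β * s ^ β) / 2 := by
        rw [Real.mul_rpow (by norm_num : (0:ℝ) ≤ 2) hs]
    _ = A ^ 2 / 2 ^ (1 - β) * s ^ β := hfin.symm
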